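/- Let (M, dist) be a metric space, a ∈ [0,1], and x, y, z, p ∈ M. Suppose dist(x,p) = a·dist(x,y) and dist(p,y) = (1−a)·dist(x,y) (i.e. p is an intermediate point at parameter a between x and y), and suppose dist(p,z) ≥ dist(x,y). Then F_{a;x,y}(z) ≥ dist(p,z)² − 4a(1−a)·dist(x,y)·dist(p,z). -/
import Mathlib

/-- Far-point estimate (Step 2 of Lemma 3.5): if `p` is an intermediate point at
parameter `a` between `x` and `y`, and `dist p z ≥ dist x y`, then
`F_{a;x,y}(z) ≥ dist p z² − 4a(1−a)·dist x y·dist p z`. -/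
theorem three_distances_far_point {M : Type*} [MetricSpace M]
    (a : ℝ) (ha : a ∈ Set.Icc (0:ℝ) 1) (x y z p : M)
    (hxp : dist x p = a * dist x y) (hpy : dist p y = (1 - a) * dist x y)
    (hpz : dist p z ≥ dist x y) :
    (1 - a) * dist x z ^ 2 + a * dist z y ^ 2 - a * (1 - a) * dist x y ^ 2
      ≥ dist p z ^ 2 - 4 * a * (1 - a) * dist x y * dist p z := by
  obtain ⟨ha0, ha1⟩ := ha
  have hL : (0:ℝ) ≤ dist x y := dist_nonneg
  have h1 : dist x z ≥ dist p z - a * dist x y := by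
    have := dist_triangle p x z
    rw [dist_comm p x, hxp] at this; linarith
  have h2 : dist z y ≥ dist p z - (1 - a) * dist x y := by
    have := dist_triangle p y z
    rw [hpy, dist_comm y z] at this; linarith
  have hn1 : (0:ℝ) ≤ dist p z - a * dist x y := by nlinarith
  have hn2 : (0:ℝ) ≤ dist p z - (1 - a) * dist x y := by nlinarith
  have hxz : (0:ℝ) ≤ dist x z := dist_nonneg
  have hzy : (0:ℝ) ≤ dist z y := dist_nonneg
  have e1 : dist x z ^ 2 ≥ (dist p z - a * dist x y) ^ 2 :=
    pow_le_pow_left₀ hn1 h1 2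
  have e2 : dist z y ^ 2 ≥ (dist p z - (1 - a) * dist x y) ^ 2 :=
    pow_le_pow_left₀ hn2 h2 2
  nlinarith [mul_le_mul_of_nonneg_left e1 (by linarith : (0:ℝ) ≤ 1 - a),
    mul_le_mul_of_nonneg_left e2 ha0]
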